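/- Consider the scalar nonlinear system ẋ₁ = -1.5x₁³ + u, ẋ₂ = -x₂³ + u with output (x₁+x₂)/2, and the abstraction x̂̇ = -1.5x̂³ + û with output x̂, with interface u = û. Define V(x, x̂) = (1/2)((x₁ - x̂)² + (x₂ - x̂)²). Then for all x₁, x₂, x̂, û ∈ ℝ: (i) ((x₁+x₂)/2 - x̂)² ≤ V(x, x̂); and (ii) (x₁ - x̂)(-1.5x₁³ + 1.5x̂³) + (x₂ - x̂)(-x₂³ + 1.5x̂³) ≤ -(1/8)V(x, x̂)² + (3/8)x̂⁴. -/
import Mathlib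


/-- V(x,x̂) = (1/2)((x₁-x̂)² + (x₂-x̂)²) is a practical simulation function
for the scalar example: output bound (i) and derivative bound (ii). -/
theorem stmt_8 (x₁ x₂ xh uh : ℝ) :
    ((x₁ + x₂)/2 - xh)^2 ≤ (1/2) * ((x₁ - xh)^2 + (x₂ - xh)^2) ∧
    (x₁ - xh) * (-1.5 * x₁^3 + 1.5 * xh^3) + (x₂ - xh) * (-x₂^3 + 1.5 * xh^3) ≤
      -(1/8) * ((1/2) * ((x₁ - xh)^2 + (x₂ - xh)^2))^2 + (3/8) * xh^4 := by
  constructor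
  · nlinarith [sq_nonneg (x₁ - x₂)]
  · nlinarith [mul_nonneg (sq_nonneg (x₁ - xh)) (sq_nonneg (x₁ + xh)),
      mul_nonneg (sq_nonneg (x₂ - xh)) (sq_nonneg (x₂ + xh)),
      sq_nonneg ((x₂ - xh)^2 - xh^2),
      sq_nonneg ((x₂ - xh)*xh - xh^2),
      sq_nonneg ((x₁ - xh)^2 - (x₂ - xh)^2)]
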